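/- Let f^k(ρ) = v^k_max ρ (1 − ρ/ρ^k_max) for k ∈ {1,2,3} be Greenshields fluxes, let ρ_0^1, ρ_0^2, ρ_0^3 ∈ ℝ, λ > 0, and let r_1, r_2 ≥ 0 with r_1 + r_2 = 1. Suppose r_1 (f^1)'(ρ_0^1) + r_2 (f^2)'(ρ_0^2) + (f^3)'(ρ_0^3) ≠ 0. Then there exists ε > 0 such that for all G_0, G_1 ∈ ℝ with |G_0| < ε and |G_1| < ε the reduced coupling equation G_0 + d_1(r_1(σ − G_1/λ)) + d_2(r_2(σ − G_1/λ)) = d_3(σ) has at least one real solution σ ∈ ℝ. -/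
import Mathlib


/-- Greenshields flux `f(ρ) = vmax ρ (1 - ρ/ρmax)`. -/
noncomputable def gflux (vmax ρmax ρ : ℝ) : ℝ := vmax * ρ * (1 - ρ / ρmax)

/-- Derivative of the Greenshields flux: `f'(ρ) = vmax (1 - 2ρ/ρmax)`. -/
noncomputable def gflux' (vmax ρmax ρ : ℝ) : ℝ := vmax * (1 - 2 * ρ / ρmax)

/-- Remark after Lemma 1: if `r1 (f¹)'(ρ₀¹) + r2 (f²)'(ρ₀²) + (f³)'(ρ₀³)` does not
vanish, the reduced coupling equation has at least one real solution whenever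
`|G0|` and `|G1|` are sufficiently small. -/
theorem stmt3
    (v1max v2max v3max ρ1max ρ2max ρ3max : ℝ)
    (hv1 : 0 < v1max) (hv2 : 0 < v2max) (hv3 : 0 < v3max)
    (hρ1 : 0 < ρ1max) (hρ2 : 0 < ρ2max) (hρ3 : 0 < ρ3max)
    (ρ01 ρ02 ρ03 : ℝ)
    (lam : ℝ) (hlam : 0 < lam)
    (r1 r2 : ℝ) (hr1 : 0 ≤ r1) (hr2 : 0 ≤ r2) (hrsum : r1 + r2 = 1)
    (d1 d2 d3 : ℝ → ℝ)
    (hd1 : ∀ σ, d1 σ = gflux v1max ρ1max (ρ01 - σ) - gflux v1max ρ1max ρ01)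
    (hd2 : ∀ σ, d2 σ = gflux v2max ρ2max (ρ02 - σ) - gflux v2max ρ2max ρ02)
    (hd3 : ∀ σ, d3 σ = gflux v3max ρ3max (ρ03 + σ) - gflux v3max ρ3max ρ03)
    (hne : r1 * gflux' v1max ρ1max ρ01 + r2 * gflux' v2max ρ2max ρ02
        + gflux' v3max ρ3max ρ03 ≠ 0) :
    ∃ ε > (0 : ℝ), ∀ G0 G1 : ℝ, |G0| < ε → |G1| < ε →
      ∃ σ : ℝ, G0 + d1 (r1 * (σ - G1 / lam)) + d2 (r2 * (σ - G1 / lam)) = d3 σ := by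
  set S : ℝ := r1 * gflux' v1max ρ1max ρ01 + r2 * gflux' v2max ρ2max ρ02
      + gflux' v3max ρ3max ρ03 with hS
  set A : ℝ := v3max / ρ3max - v1max / ρ1max * r1 ^ 2 - v2max / ρ2max * r2 ^ 2 with hA
  have hSpos : 0 < |S| := abs_pos.mpr hne
  set δ : ℝ := |S| / (|A| + 1) with hδdef
  have hδpos : 0 < δ := div_pos hSpos (by positivity)
  -- base value computation
  have hbase : ∀ σ : ℝ,
      (0 : ℝ) + d1 (r1 * (σ - 0 / lam)) + d2 (r2 * (σ - 0 / lam)) - d3 σ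
        = A * σ ^ 2 - S * σ := by
    intro σ
    rw [hd1, hd2, hd3, hS, hA]
    simp only [gflux, gflux', zero_div, sub_zero, zero_add]
    field_simp
    ring
  -- the product of the base values at ±δ is negative
  have hAbd1 : A * δ < |S| := by
    have h1 : A * δ ≤ |A| * δ := mul_le_mul_of_nonneg_right (le_abs_self A) hδpos.le
    have h2 : |A| * δ < (|A| + 1) * δ := by nlinarith
    have h3 : (|A| + 1) * δ = |S| := by rw [hδdef]; field_simp
    linarith
  have hAbd2 : -|S| < A * δ := by
    have h1 : -|A| * δ ≤ A * δ := mul_le_mul_of_nonneg_right (neg_abs_le A) hδpos.le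
    have h2 : -((|A| + 1) * δ) < -|A| * δ := by nlinarith
    have h3 : (|A| + 1) * δ = |S| := by rw [hδdef]; field_simp
    linarith
  have hprod : (A * δ ^ 2 - S * δ) * (A * (-δ) ^ 2 - S * (-δ)) < 0 := by
    have hkey : 0 < S ^ 2 - (A * δ) ^ 2 := by
      have := mul_pos (by linarith : 0 < |S| - A * δ) (by linarith : 0 < |S| + A * δ)
      nlinarith [sq_abs S]
    nlinarith [mul_pos hδpos hδpos]
  -- continuity of the product as a function of (G0, G1)
  set Ψ : ℝ × ℝ → ℝ := fun q =>
    (q.1 + d1 (r1 * (δ - q.2 / lam)) + d2 (r2 * (δ - q.2 / lam)) - d3 δ) *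
    (q.1 + d1 (r1 * (-δ - q.2 / lam)) + d2 (r2 * (-δ - q.2 / lam)) - d3 (-δ)) with hΨ
  have hcont : Continuous Ψ := by
    rw [hΨ]
    simp only [hd1, hd2, hd3, gflux]
    fun_prop
  have hΨ00 : Ψ (0, 0) < 0 := by
    have e1 := hbase δ
    have e2 := hbase (-δ)
    rw [hΨ]
    dsimp only
    rw [e1, e2]
    exact hprod
  -- extract a ball on which Ψ stays negative
  have hopen : IsOpen {q : ℝ × ℝ | Ψ q < 0} := isOpen_lt hcont continuous_const
  obtain ⟨ε, hεpos, hball⟩ := Metric.isOpen_iff.mp hopen (0, 0) hΨ00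
  refine ⟨ε, hεpos, ?_⟩
  intro G0 G1 hG0 hG1
  have hmem : ((G0, G1) : ℝ × ℝ) ∈ Metric.ball ((0, 0) : ℝ × ℝ) ε := by
    rw [Metric.mem_ball, Prod.dist_eq]
    simp only [Real.dist_eq, sub_zero]
    exact max_lt hG0 hG1
  have hΨneg : Ψ (G0, G1) < 0 := hball hmem
  -- the function of σ
  set f : ℝ → ℝ := fun σ =>
    G0 + d1 (r1 * (σ - G1 / lam)) + d2 (r2 * (σ - G1 / lam)) - d3 σ with hf
  have hfc : Continuous f := by
    rw [hf]
    simp only [hd1, hd2, hd3, gflux]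
    fun_prop
  have hΨeq : Ψ (G0, G1) = f δ * f (-δ) := by rw [hΨ, hf]
  rw [hΨeq] at hΨneg
  have h0mem : (0 : ℝ) ∈ Set.uIcc (f (-δ)) (f δ) := by
    rcases mul_neg_iff.mp hΨneg with ⟨h1, h2⟩ | ⟨h1, h2⟩
    · exact Set.mem_uIcc.mpr (Or.inl ⟨h2.le, h1.le⟩)
    · exact Set.mem_uIcc.mpr (Or.inr ⟨h1.le, h2.le⟩)
  obtain ⟨σ, -, hσ⟩ := intermediate_value_uIcc (f := f) (a := -δ) (b := δ)
    hfc.continuousOn h0mem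
  refine ⟨σ, ?_⟩
  have : G0 + d1 (r1 * (σ - G1 / lam)) + d2 (r2 * (σ - G1 / lam)) - d3 σ = 0 := hσ
  linarith
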